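/- Let S be a finite set of N > d points of ℝ^d in general position and let q ∈ {-1,+1}^N be realizable by an affine classifier on S. Then there exists a subset S_h ⊂ S of size d and a hyperplane through the points of S_h such that every labeling of S that agrees with q on S \ S_h is obtained from the hyperplane's sign classification by assigning arbitrary signs to the points of S_h; in particular there are at most 2^d realizable labelings agreeing with q on S \ S_h. -/

import Mathlib

open Classical in
/-- sign function: 1 if u ≥ 0, -1 otherwise. -/
noncomputable def sgnR (u : ℝ) : ℤ := if 0 ≤ u then 1 else -1

namespace Stmt12

lemma sgnR_eq_of_mul_pos {a b : ℝ} (h : 0 < a * b) : sgnR a = sgnR b := by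
  rcases lt_or_ge a 0 with ha | ha
  · have hb : b < 0 := by nlinarith
    simp [sgnR, not_le.mpr ha, not_le.mpr hb]
  · have ha0 : a ≠ 0 := by rintro rfl; simp at h
    have ha' : 0 < a := lt_of_le_of_ne ha (fun e => ha0 e.symm)
    have hb : 0 < b := by nlinarith
    simp [sgnR, ha'.le, hb.le]

lemma mul_pos_trans {a b c : ℝ} (h1 : 0 < a * b) (h2 : 0 < b * c) : 0 < a * c := by
  rcases lt_trichotomy b 0 with hb | hb | hb
  · have ha : a < 0 := by nlinarith
    have hc : c < 0 := by nlinarith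
    exact mul_pos_of_neg_of_neg ha hc
  · subst hb; simp at h1
  · have ha : 0 < a := by nlinarith
    have hc : 0 < c := by nlinarith
    exact mul_pos ha hc

variable {d N : ℕ} (x : Fin N → Fin d → ℝ)

/-- The affine functional evaluated at point i. -/
noncomputable def Fv (h : Fin d → ℝ) (b : ℝ) (i : Fin N) : ℝ := (∑ j, h j * x i j) + b

/-- zero set -/
noncomputable def Zs (h : Fin d → ℝ) (b : ℝ) : Finset (Fin N) :=
  Finset.univ.filter (fun i => Fv x h b i = 0)

lemma mem_Zs {h b i} : i ∈ Zs x h b ↔ Fv x h b i = 0 := by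
  simp [Zs]

lemma Fv_add_smul (h g : Fin d → ℝ) (b c t : ℝ) (i : Fin N) :
    Fv x (h + t • g) (b + t * c) i = Fv x h b i + t * Fv x g c i := by
  have hj : ∀ j ∈ Finset.univ, (h + t • g) j * x i j
      = h j * x i j + t * (g j * x i j) := by
    intro j _
    simp [add_mul, mul_assoc]
  unfold Fv
  rw [Finset.sum_congr rfl hj, Finset.sum_add_distrib, ← Finset.mul_sum]
  ring


/-- the affine evaluation at point i, as a linear map in (h,b). -/
noncomputable def phiL (i : Fin N) : ((Fin d → ℝ) × ℝ) →ₗ[ℝ] ℝ where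
  toFun p := Fv x p.1 p.2 i
  map_add' p q := by
    simp only [Fv, Prod.fst_add, Prod.snd_add, Pi.add_apply, add_mul,
      Finset.sum_add_distrib]
    ring
  map_smul' t p := by
    simp only [Fv, Prod.smul_fst, Prod.smul_snd, Pi.smul_apply, smul_eq_mul,
      RingHom.id_apply]
    rw [mul_add, Finset.mul_sum]
    congr 1
    exact Finset.sum_congr rfl (fun j _ => by ring)

lemma Fv_all_zero (hdN : d < N)
    (hgen : ∀ (h : Fin d → ℝ) (b : ℝ), h ≠ 0 →
      Set.ncard {i : Fin N | (∑ j, h j * x i j) + b = 0} ≤ d)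
    {h : Fin d → ℝ} {b : ℝ} (hall : ∀ i, Fv x h b i = 0) : h = 0 ∧ b = 0 := by
  have hh : h = 0 := by
    by_contra hne
    have h1 := hgen h b hne
    have h2 : {i : Fin N | (∑ j, h j * x i j) + b = 0} = Set.univ := by
      ext i; simpa [Fv] using hall i
    rw [h2, Set.ncard_univ, Nat.card_eq_fintype_card, Fintype.card_fin] at h1
    omega
  subst hh
  have h0 : (0:ℕ) < N := lt_of_le_of_lt (Nat.zero_le d) hdN
  have := hall ⟨0, h0⟩
  simp [Fv] at this
  exact ⟨rfl, this⟩

lemma Zs_card_le (hdN : d < N)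
    (hgen : ∀ (h : Fin d → ℝ) (b : ℝ), h ≠ 0 →
      Set.ncard {i : Fin N | (∑ j, h j * x i j) + b = 0} ≤ d)
    {h : Fin d → ℝ} {b : ℝ} (hnz : ¬(h = 0 ∧ b = 0)) : (Zs x h b).card ≤ d := by
  by_cases hh : h = 0
  · subst hh
    have hb : b ≠ 0 := fun e => hnz ⟨rfl, e⟩
    have : Zs x 0 b = ∅ := by
      ext i; simp [mem_Zs, Fv, hb]
    simp [this]
  · have h1 := hgen h b hh
    have h2 : {i : Fin N | (∑ j, h j * x i j) + b = 0} = ↑(Zs x h b) := by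
      ext i; rw [Finset.mem_coe, mem_Zs]
      exact Iff.rfl
    rw [h2, Set.ncard_coe_finset] at h1
    exact h1


lemma step (hdN : d < N)
    (hgen : ∀ (h : Fin d → ℝ) (b : ℝ), h ≠ 0 →
      Set.ncard {i : Fin N | (∑ j, h j * x i j) + b = 0} ≤ d)
    {h : Fin d → ℝ} {b : ℝ} (hnz : ¬(h = 0 ∧ b = 0)) (hcard : (Zs x h b).card < d) :
    ∃ h' b', ¬(h' = 0 ∧ b' = 0) ∧ Zs x h b ⊂ Zs x h' b' ∧
      ∀ i ∉ Zs x h' b', 0 < Fv x h b i * Fv x h' b' i := by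
  classical
  set Z := Zs x h b with hZdef
  set Ψ : ((Fin d → ℝ) × ℝ) →ₗ[ℝ] (↥Z → ℝ) := LinearMap.pi (fun i => phiL x i.1) with hΨ
  have hdom : Module.finrank ℝ ((Fin d → ℝ) × ℝ) = d + 1 := by simp
  have hrange : Module.finrank ℝ ↥(LinearMap.range Ψ) ≤ Z.card := by
    have h1 := Submodule.finrank_le (LinearMap.range Ψ)
    simpa using h1
  have hsum := LinearMap.finrank_range_add_finrank_ker Ψ
  rw [hdom] at hsum
  have hker2 : 2 ≤ Module.finrank ℝ ↥(LinearMap.ker Ψ) := by omega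
  have hhbne : ((h, b) : (Fin d → ℝ) × ℝ) ≠ 0 := by
    intro e
    exact hnz ⟨congrArg Prod.fst e, congrArg Prod.snd e⟩
  obtain ⟨w, hwker, hwspan⟩ :
      ∃ w ∈ LinearMap.ker Ψ, w ∉ Submodule.span ℝ {((h, b) : (Fin d → ℝ) × ℝ)} := by
    by_contra hcon
    push_neg at hcon
    have hle : LinearMap.ker Ψ ≤ Submodule.span ℝ {((h, b) : (Fin d → ℝ) × ℝ)} := hcon
    have h2 := Submodule.finrank_mono hle
    rw [finrank_span_singleton hhbne] at h2
    omega
  set g : Fin d → ℝ := w.1 with hgdef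
  set c : ℝ := w.2 with hcdef
  have hgZ : ∀ i ∈ Z, Fv x g c i = 0 := by
    intro i hi
    have h1 : Ψ w = 0 := LinearMap.mem_ker.mp hwker
    have h2 := congrFun h1 ⟨i, hi⟩
    simpa [hΨ, phiL] using h2
  have hgsome : ∃ i, Fv x g c i ≠ 0 := by
    by_contra hall
    push_neg at hall
    obtain ⟨e1, e2⟩ := Fv_all_zero x hdN hgen hall
    have : w = 0 := Prod.ext e1 e2
    exact hwspan (this ▸ Submodule.zero_mem _)
  set C : Finset (Fin N) := Finset.univ.filter (fun i => Fv x g c i ≠ 0) with hCdef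
  have hCne : C.Nonempty := by
    obtain ⟨i, hi⟩ := hgsome
    exact ⟨i, by simp [hCdef, hi]⟩
  set tf : Fin N → ℝ := fun i => -(Fv x h b i) / Fv x g c i with htf
  obtain ⟨i₀, hi₀C, hmin⟩ := Finset.exists_min_image C (fun i => |tf i|) hCne
  set t : ℝ := tf i₀ with htdef
  have hGi₀ : Fv x g c i₀ ≠ 0 := by
    have := hi₀C
    simp [hCdef] at this
    exact this
  have hi₀Z : i₀ ∉ Z := fun hin => hGi₀ (hgZ i₀ hin)
  have hFi₀ : Fv x h b i₀ ≠ 0 := fun e => hi₀Z ((mem_Zs x).mpr e)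
  have ht0 : t ≠ 0 := by
    rw [htdef, htf]
    exact div_ne_zero (neg_ne_zero.mpr hFi₀) hGi₀
  have hsub : Z ⊆ Zs x (h + t • g) (b + t * c) := by
    intro i hi
    rw [mem_Zs, Fv_add_smul, (mem_Zs x).mp hi, hgZ i hi]
    ring
  have hi₀new : i₀ ∈ Zs x (h + t • g) (b + t * c) := by
    rw [mem_Zs, Fv_add_smul, htdef, htf]
    field_simp
    ring
  refine ⟨h + t • g, b + t * c, ?_, ?_, ?_⟩
  · rintro ⟨e1, e2⟩
    apply hwspan
    rw [Submodule.mem_span_singleton]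
    refine ⟨-t⁻¹, ?_⟩
    have hw : w = (g, c) := rfl
    rw [hw]
    refine Prod.ext ?_ ?_
    · funext j
      have := congrFun e1 j
      simp only [Pi.add_apply, Pi.smul_apply, smul_eq_mul, Pi.zero_apply] at this
      simp only [Prod.smul_fst, Pi.smul_apply, smul_eq_mul]
      field_simp
      linarith
    · simp only [Prod.smul_snd, smul_eq_mul]
      field_simp
      linarith
  · exact (Finset.ssubset_iff_of_subset hsub).mpr ⟨i₀, hi₀new, hi₀Z⟩
  · intro i hiZ'
    have hiZ : i ∉ Z := fun hin => hiZ' (hsub hin)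
    have hFi : Fv x h b i ≠ 0 := fun e => hiZ ((mem_Zs x).mpr e)
    rw [Fv_add_smul]
    by_cases hGi : Fv x g c i = 0
    · rw [hGi, mul_zero, add_zero]
      exact mul_self_pos.mpr hFi
    · have hiC : i ∈ C := by simp [hCdef, hGi]
      have habs : |t| ≤ |tf i| := hmin i hiC
      have hFi' : Fv x h b i + t * Fv x g c i ≠ 0 := by
        intro e
        apply hiZ'
        rw [mem_Zs, Fv_add_smul]
        exact e
      have hFeq : Fv x h b i = -(tf i) * Fv x g c i := by
        rw [htf]
        field_simp
      have hti0 : tf i ≠ 0 := by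
        rw [htf]
        exact div_ne_zero (neg_ne_zero.mpr hFi) hGi
      have htne : tf i ≠ t := by
        intro e
        apply hFi'
        rw [hFeq, ← e]
        ring
      have key : 0 < tf i * (tf i - t) := by
        rcases lt_trichotomy (tf i) 0 with hlt | heq | hgt
        · have h1 : |tf i| = -(tf i) := abs_of_neg hlt
          have h2 : -|t| ≤ t := neg_abs_le t
          have h3 : tf i < t := lt_of_le_of_ne (by linarith) htne
          nlinarith
        · exact absurd heq hti0
        · have h1 : |tf i| = tf i := abs_of_pos hgt
          have h2 : t ≤ |t| := le_abs_self t
          have h3 : t < tf i := lt_of_le_of_ne (by linarith) (fun e => htne e.symm)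
          nlinarith
      have hG2 : 0 < Fv x g c i ^ 2 :=
        lt_of_le_of_ne (sq_nonneg _) ((pow_ne_zero 2 hGi).symm)
      have heq2 : Fv x h b i * (Fv x h b i + t * Fv x g c i)
          = (tf i * (tf i - t)) * Fv x g c i ^ 2 := by
        rw [hFeq]
        ring
      rw [heq2]
      exact mul_pos key hG2


lemma build (hdN : d < N)
    (hgen : ∀ (h : Fin d → ℝ) (b : ℝ), h ≠ 0 →
      Set.ncard {i : Fin N | (∑ j, h j * x i j) + b = 0} ≤ d) :
    ∀ (k : ℕ) (h : Fin d → ℝ) (b : ℝ), ¬(h = 0 ∧ b = 0) → d ≤ (Zs x h b).card + k →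
      ∃ h' b', (Zs x h' b').card = d ∧ Zs x h b ⊆ Zs x h' b' ∧
        ∀ i ∉ Zs x h' b', 0 < Fv x h b i * Fv x h' b' i := by
  intro k
  induction k with
  | zero =>
    intro h b hnz hle
    have hZle := Zs_card_le x hdN hgen hnz
    refine ⟨h, b, by omega, Finset.Subset.refl _, fun i hi => ?_⟩
    have hFi : Fv x h b i ≠ 0 := fun e => hi ((mem_Zs x).mpr e)
    exact mul_self_pos.mpr hFi
  | succ k ih =>
    intro h b hnz hle
    have hZle := Zs_card_le x hdN hgen hnz
    by_cases hceq : (Zs x h b).card = d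
    · refine ⟨h, b, hceq, Finset.Subset.refl _, fun i hi => ?_⟩
      have hFi : Fv x h b i ≠ 0 := fun e => hi ((mem_Zs x).mpr e)
      exact mul_self_pos.mpr hFi
    · have hclt : (Zs x h b).card < d := lt_of_le_of_ne hZle hceq
      obtain ⟨h₁, b₁, hnz₁, hss, hsign₁⟩ := step x hdN hgen hnz hclt
      have hcard₁ : (Zs x h b).card < (Zs x h₁ b₁).card := Finset.card_lt_card hss
      obtain ⟨h', b', hcard', hsub', hsign'⟩ := ih h₁ b₁ hnz₁ (by omega)
      refine ⟨h', b', hcard', hss.subset.trans hsub', fun i hi => ?_⟩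
      have hi₁ : i ∉ Zs x h₁ b₁ := fun hin => hi (hsub' hin)
      exact mul_pos_trans (hsign₁ i hi₁) (hsign' i hi)


lemma sgnR_vals (u : ℝ) : sgnR u = 1 ∨ sgnR u = -1 := by
  unfold sgnR
  split <;> simp

lemma count_le (T : Finset (Fin N)) (q : Fin N → ℤ) :
    Set.ncard {q' : Fin N → ℤ |
        (∃ (h : Fin d → ℝ) (b : ℝ), ∀ i, q' i = sgnR ((∑ j, h j * x i j) + b)) ∧
        ∀ i ∉ T, q' i = q i} ≤ 2 ^ T.card := by
  classical
  set S := {q' : Fin N → ℤ |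
      (∃ (h : Fin d → ℝ) (b : ℝ), ∀ i, q' i = sgnR ((∑ j, h j * x i j) + b)) ∧
      ∀ i ∉ T, q' i = q i} with hSdef
  have hval : ∀ q' ∈ S, ∀ i, q' i = 1 ∨ q' i = -1 := by
    intro q' hq' i
    obtain ⟨⟨h, b, hr⟩, -⟩ := hq'
    rw [hr i]
    exact sgnR_vals _
  set Φ : (Fin N → ℤ) → (↥T → Bool) := fun q' i => decide (q' i.1 = 1) with hΦ
  have hinj : Set.InjOn Φ S := by
    intro q₁ h₁ q₂ h₂ he
    funext i
    by_cases hiT : i ∈ T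
    · have hd := congrFun he ⟨i, hiT⟩
      simp only [hΦ] at hd
      have hiff : (q₁ i = 1) ↔ (q₂ i = 1) := decide_eq_decide.mp hd
      rcases hval q₁ h₁ i with e1 | e1 <;> rcases hval q₂ h₂ i with e2 | e2
      · rw [e1, e2]
      · exact absurd (hiff.mp e1) (by rw [e2]; decide)
      · exact absurd (hiff.mpr e2) (by rw [e1]; decide)
      · rw [e1, e2]
    · rw [h₁.2 i hiT, h₂.2 i hiT]
  calc S.ncard = (Φ '' S).ncard := (Set.ncard_image_of_injOn hinj).symm
    _ ≤ (Set.univ : Set (↥T → Bool)).ncard :=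
        Set.ncard_le_ncard (Set.subset_univ _) Set.finite_univ
    _ = 2 ^ T.card := by
        rw [Set.ncard_univ, Nat.card_eq_fintype_card]
        simp [Fintype.card_fun]

end Stmt12

open Stmt12 in
/-- For any realizable labeling q of N > d points in general position, there
is a d-point subset S_h and a hyperplane through S_h whose sign classification agrees with
q outside S_h; in particular at most 2^d realizable labelings agree with q outside S_h. -/
theorem stmt12 (d N : ℕ) (hdN : d < N) (x : Fin N → (Fin d → ℝ))
    (hgen : ∀ (h : Fin d → ℝ) (b : ℝ), h ≠ 0 →
      Set.ncard {i : Fin N | (∑ j, h j * x i j) + b = 0} ≤ d)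
    (q : Fin N → ℤ)
    (hq : ∃ (h : Fin d → ℝ) (b : ℝ), ∀ i, q i = sgnR ((∑ j, h j * x i j) + b)) :
    ∃ T : Finset (Fin N), T.card = d ∧
      ∃ (h' : Fin d → ℝ) (b' : ℝ),
        (∀ i ∈ T, (∑ j, h' j * x i j) + b' = 0) ∧
        (∀ i ∉ T, q i = sgnR ((∑ j, h' j * x i j) + b')) ∧
        Set.ncard {q' : Fin N → ℤ |
            (∃ (h : Fin d → ℝ) (b : ℝ), ∀ i, q' i = sgnR ((∑ j, h j * x i j) + b)) ∧
            ∀ i ∉ T, q' i = q i} ≤ 2 ^ d := by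
  obtain ⟨h, b, hqr⟩ := hq
  obtain ⟨h₀, b₀, hnz₀, hqr₀⟩ :
      ∃ h₀ b₀, ¬(h₀ = 0 ∧ b₀ = 0) ∧ ∀ i, q i = sgnR (Fv x h₀ b₀ i) := by
    by_cases hz : h = 0 ∧ b = 0
    · refine ⟨0, 1, by simp, fun i => ?_⟩
      have hq1 : q i = 1 := by
        rw [hqr i, hz.1, hz.2]
        simp [sgnR]
      rw [hq1]
      simp [Fv, sgnR]
    · exact ⟨h, b, hz, fun i => hqr i⟩
  obtain ⟨h', b', hcard', hsub', hsign'⟩ :=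
    build x hdN hgen d h₀ b₀ hnz₀ (Nat.le_add_left d _)
  refine ⟨Zs x h' b', hcard', h', b', ?_, ?_, ?_⟩
  · intro i hi
    exact (mem_Zs x).mp hi
  · intro i hi
    rw [hqr₀ i]
    exact sgnR_eq_of_mul_pos (hsign' i hi)
  · have := count_le x (Zs x h' b') q
    rwa [hcard'] at this
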